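/- Let μ, ν ∈ ℂ with |μ| = |ν| = 1 and μ = ν or μ = −ν. Let V be the complex subspace of ℂ^{n×m} consisting of all matrices whose nonzero entries are confined to the first column if n ≤ m and to the first row if n > m. Then for every pair (B,A) ∈ ℂ^{n×m} × ℂ^{m×n} there exists exactly one D ∈ V such that (B − D, A) ∈ T(μΔ_m, νΔ_n); that is, ℂ^{n×m} × ℂ^{m×n} = T(μΔ_m, νΔ_n) ⊕_ℝ (V × {0}). -/

import Mathlib

open Matrix
open Finset

/-- The `n×n` upper-triangular Jordan block with eigenvalue `l`. -/
noncomputable def Jmat (n : ℕ) (l : ℂ) : Matrix (Fin n) (Fin n) ℂ :=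
  Matrix.of fun i j =>
    if (i : ℕ) = (j : ℕ) then l
    else if (j : ℕ) = (i : ℕ) + 1 then 1 else 0

/-- The symmetric matrix `Δ_n`: (1-based) entry `(j,k)` is `1` if `j+k = n+1`,
`i` if `j+k = n+2`, and `0` otherwise. -/
noncomputable def Dmat (n : ℕ) : Matrix (Fin n) (Fin n) ℂ :=
  Matrix.of fun i j =>
    if (i : ℕ) + (j : ℕ) + 1 = n then 1
    else if (i : ℕ) + (j : ℕ) = n then Complex.I
    else 0

/-- The `2m×2m` block matrix `H_m(l) = [[0, I],[J_m(l), 0]]`. -/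
noncomputable def Hmat (m : ℕ) (l : ℂ) : Matrix (Fin m ⊕ Fin m) (Fin m ⊕ Fin m) ℂ :=
  Matrix.fromBlocks 0 1 (Jmat m l) 0

/-- `T(A) = {CᴴA + AC}`, the tangent space to the *congruence class of `A`. -/
def Tset {n : Type*} [Fintype n] (A : Matrix n n ℂ) : Set (Matrix n n ℂ) :=
  {X | ∃ C : Matrix n n ℂ, X = Cᴴ * A + A * C}

/-- `T(M,N) = {(SᴴM + NR, RᴴN + MS)}`. -/
def Tpair {p q : Type*} [Fintype p] [Fintype q]
    (M : Matrix p p ℂ) (N : Matrix q q ℂ) :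
    Set (Matrix q p ℂ × Matrix p q ℂ) :=
  {X | ∃ (S : Matrix p q ℂ) (R : Matrix q p ℂ),
      X = (Sᴴ * M + N * R, Rᴴ * N + M * S)}



noncomputable def Km (n : ℕ) : Matrix (Fin n) (Fin n) ℂ := Jmat n 0

lemma Km_apply (n : ℕ) (i j : Fin n) : Km n i j = if (j:ℕ) = (i:ℕ)+1 then 1 else 0 := by
  simp only [Km, Jmat, of_apply]
  rcases eq_or_ne ((i:ℕ)) ((j:ℕ)) with h | h
  · have : ¬ ((j:ℕ) = (i:ℕ)+1) := by omega
    simp [h, this]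
  · simp [h]

noncomputable def Fm (n : ℕ) : Matrix (Fin n) (Fin n) ℂ :=
  Matrix.of fun i j => if (i:ℕ)+(j:ℕ)+1 = n then 1 else 0

def rev {n : ℕ} (i : Fin n) : Fin n := ⟨n-1-(i:ℕ), by omega⟩

lemma Fmul_apply {n m : ℕ} (X : Matrix (Fin n) (Fin m) ℂ) (i : Fin n) (j : Fin m) :
    (Fm n * X) i j = X (rev i) j := by
  rw [Matrix.mul_apply]
  rw [Finset.sum_eq_single (rev i)]
  · simp [Fm, rev]; intro h; exfalso; apply h; omega
  · intro b _ hb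
    simp [Fm, rev]
    intro h; exfalso; apply hb; apply Fin.ext; simp [rev]; omega
  · simp

lemma Kmul_apply {n m : ℕ} (X : Matrix (Fin n) (Fin m) ℂ) (i : Fin n) (j : Fin m) :
    (Km n * X) i j = if h : (i:ℕ)+1 < n then X ⟨(i:ℕ)+1, h⟩ j else 0 := by
  rw [Matrix.mul_apply]
  by_cases h : (i:ℕ)+1 < n
  · rw [Finset.sum_eq_single (⟨(i:ℕ)+1, h⟩ : Fin n)]
    · simp [Km_apply, h]
    · intro b _ hb; rw [Km_apply]; simp; intro hb'; exfalso; exact hb (Fin.ext hb')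
    · simp
  · rw [dif_neg h]
    apply Finset.sum_eq_zero
    intro b _; rw [Km_apply]
    have : (b:ℕ) ≠ (i:ℕ)+1 := by have := b.isLt; omega
    simp [this]

lemma mulK_apply {n m : ℕ} (X : Matrix (Fin n) (Fin m) ℂ) (i : Fin n) (j : Fin m) :
    (X * Km m) i j = if h : 1 ≤ (j:ℕ) then X i ⟨(j:ℕ)-1, by omega⟩ else 0 := by
  rw [Matrix.mul_apply]
  by_cases h : 1 ≤ (j:ℕ)
  · rw [Finset.sum_eq_single (⟨(j:ℕ)-1, by omega⟩ : Fin m)]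
    · rw [Km_apply, dif_pos h]
      have : (j:ℕ) = ((⟨(j:ℕ)-1, by omega⟩ : Fin m) : ℕ) + 1 := by
        simp only [Fin.val_mk]; omega
      rw [if_pos this, mul_one]
    · intro b _ hb; rw [Km_apply]
      have : ¬ ((j:ℕ) = (b:ℕ)+1) := by
        intro hc; exact hb (Fin.ext (by simp only [Fin.val_mk]; omega))
      simp [this]
    · simp
  · rw [dif_neg h]
    apply Finset.sum_eq_zero
    intro b _; rw [Km_apply]
    have : (j:ℕ) ≠ (b:ℕ)+1 := by omega
    simp [this]

-- new part
noncomputable def Pm (n : ℕ) : Matrix (Fin n) (Fin n) ℂ := 1 + Complex.I • Km n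
noncomputable def Qm (n : ℕ) : Matrix (Fin n) (Fin n) ℂ := 1 - Complex.I • Km n

lemma F_mul_F (n : ℕ) : Fm n * Fm n = 1 := by
  ext i j
  rw [Fmul_apply]
  simp only [Fm, of_apply, rev, Matrix.one_apply]
  by_cases h : i = j
  · subst h; rw [if_pos (by omega), if_pos rfl]
  · rw [if_neg (by simp [Fin.ext_iff] at h ⊢; omega), if_neg h]

lemma Dmat_eq (n : ℕ) : Dmat n = Fm n * Pm n := by
  ext i j
  rw [Fmul_apply]
  simp only [Dmat, Pm, of_apply, Matrix.add_apply, Matrix.smul_apply, Matrix.one_apply,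
    Km_apply, rev, smul_eq_mul]
  have hi := i.isLt; have hj := j.isLt
  by_cases h1 : (i:ℕ)+(j:ℕ)+1 = n
  · rw [if_pos h1, if_pos (by simp only [Fin.ext_iff, Fin.val_mk]; omega), if_neg (by omega)]
    simp
  · rw [if_neg h1]
    by_cases h2 : (i:ℕ)+(j:ℕ) = n
    · rw [if_pos h2, if_neg (by simp only [Fin.ext_iff, Fin.val_mk]; omega), if_pos (by omega)]
      simp
    · rw [if_neg h2, if_neg (by simp only [Fin.ext_iff, Fin.val_mk]; omega), if_neg (by omega)]
      simp

lemma DmatH_eq (n : ℕ) : (Dmat n)ᴴ = Fm n * Qm n := by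
  ext i j
  rw [Fmul_apply]
  simp only [Dmat, Qm, conjTranspose_apply, of_apply, Matrix.sub_apply, Matrix.smul_apply,
    Matrix.one_apply, Km_apply, rev, smul_eq_mul]
  have hi := i.isLt; have hj := j.isLt
  by_cases h1 : (i:ℕ)+(j:ℕ)+1 = n
  · rw [if_pos (by omega), if_pos (by simp only [Fin.ext_iff, Fin.val_mk]; omega), if_neg (by omega)]
    simp
  · rw [if_neg (by omega)]
    by_cases h2 : (i:ℕ)+(j:ℕ) = n
    · rw [if_pos (by omega), if_neg (by simp only [Fin.ext_iff, Fin.val_mk]; omega), if_pos (by omega)]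
      simp [Complex.conj_I]
    · rw [if_neg (by omega), if_neg (by simp only [Fin.ext_iff, Fin.val_mk]; omega), if_neg (by omega)]
      simp

noncomputable def PmInv (n : ℕ) : Matrix (Fin n) (Fin n) ℂ :=
  Matrix.of fun i j => if (i:ℕ) ≤ (j:ℕ) then (-Complex.I)^((j:ℕ)-(i:ℕ)) else 0
noncomputable def QmInv (n : ℕ) : Matrix (Fin n) (Fin n) ℂ :=
  Matrix.of fun i j => if (i:ℕ) ≤ (j:ℕ) then (Complex.I)^((j:ℕ)-(i:ℕ)) else 0

lemma Pmul_apply {n m : ℕ} (X : Matrix (Fin n) (Fin m) ℂ) (i : Fin n) (j : Fin m) :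
    (Pm n * X) i j = X i j + Complex.I * (if h : (i:ℕ)+1 < n then X ⟨(i:ℕ)+1, h⟩ j else 0) := by
  simp only [Pm, Matrix.add_mul, Matrix.one_mul, Matrix.smul_mul, Matrix.add_apply,
    Matrix.smul_apply, Kmul_apply, smul_eq_mul]

lemma Qmul_apply {n m : ℕ} (X : Matrix (Fin n) (Fin m) ℂ) (i : Fin n) (j : Fin m) :
    (Qm n * X) i j = X i j - Complex.I * (if h : (i:ℕ)+1 < n then X ⟨(i:ℕ)+1, h⟩ j else 0) := by
  simp only [Qm, Matrix.sub_mul, Matrix.one_mul, Matrix.smul_mul, Matrix.sub_apply,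
    Matrix.smul_apply, Kmul_apply, smul_eq_mul]

lemma Pm_mul_PmInv (n : ℕ) : Pm n * PmInv n = 1 := by
  ext i j
  rw [Pmul_apply]
  simp only [PmInv, of_apply, Matrix.one_apply]
  by_cases hij : (i:ℕ) = (j:ℕ)
  · have : i = j := Fin.ext hij
    subst this
    rw [if_pos le_rfl]
    have h2 : ∀ h : (i:ℕ)+1 < n, ¬ (((⟨(i:ℕ)+1, h⟩ : Fin n) :ℕ) ≤ (i:ℕ)) := by
      intro h; simp
    by_cases h : (i:ℕ)+1 < n
    · rw [dif_pos h, if_neg (h2 h)]; simp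
    · rw [dif_neg h]; simp
  · rw [if_neg (fun hc : i = j => hij (congrArg Fin.val hc))]
    by_cases hlt : (i:ℕ) < (j:ℕ)
    · have h : (i:ℕ)+1 < n := by have := j.isLt; omega
      rw [dif_pos h]
      rw [if_pos (le_of_lt hlt), if_pos (by omega : (i:ℕ)+1 ≤ (j:ℕ))]
      have hd : (j:ℕ)-(i:ℕ) = ((j:ℕ)-((i:ℕ)+1))+1 := by omega
      rw [hd, pow_succ]
      ring
    · rw [if_neg (by omega)]
      have h2 : ∀ h : (i:ℕ)+1 < n, ¬ (((⟨(i:ℕ)+1, h⟩ : Fin n) :ℕ) ≤ (j:ℕ)) := by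
        intro h; simp; omega
      by_cases h : (i:ℕ)+1 < n
      · rw [dif_pos h, if_neg (h2 h)]; simp
      · rw [dif_neg h]; simp

lemma Qm_mul_QmInv (n : ℕ) : Qm n * QmInv n = 1 := by
  ext i j
  rw [Qmul_apply]
  simp only [QmInv, of_apply, Matrix.one_apply]
  by_cases hij : (i:ℕ) = (j:ℕ)
  · have : i = j := Fin.ext hij
    subst this
    rw [if_pos le_rfl]
    have h2 : ∀ h : (i:ℕ)+1 < n, ¬ (((⟨(i:ℕ)+1, h⟩ : Fin n) :ℕ) ≤ (i:ℕ)) := by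
      intro h; simp
    by_cases h : (i:ℕ)+1 < n
    · rw [dif_pos h, if_neg (h2 h)]; simp
    · rw [dif_neg h]; simp
  · rw [if_neg (fun hc : i = j => hij (congrArg Fin.val hc))]
    by_cases hlt : (i:ℕ) < (j:ℕ)
    · have h : (i:ℕ)+1 < n := by have := j.isLt; omega
      rw [dif_pos h]
      rw [if_pos (le_of_lt hlt), if_pos (by omega : (i:ℕ)+1 ≤ (j:ℕ))]
      have hd : (j:ℕ)-(i:ℕ) = ((j:ℕ)-((i:ℕ)+1))+1 := by omega
      rw [hd, pow_succ]
      ring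
    · rw [if_neg (by omega)]
      have h2 : ∀ h : (i:ℕ)+1 < n, ¬ (((⟨(i:ℕ)+1, h⟩ : Fin n) :ℕ) ≤ (j:ℕ)) := by
        intro h; simp; omega
      by_cases h : (i:ℕ)+1 < n
      · rw [dif_pos h, if_neg (h2 h)]; simp
      · rw [dif_neg h]; simp

lemma PmInv_mul_Pm (n : ℕ) : PmInv n * Pm n = 1 :=
  (mul_eq_one_comm).mp (Pm_mul_PmInv n)
lemma QmInv_mul_Qm (n : ℕ) : QmInv n * Qm n = 1 :=
  (mul_eq_one_comm).mp (Qm_mul_QmInv n)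

lemma Pm_comm_Qm (n : ℕ) : Pm n * Qm n = Qm n * Pm n := by
  have h : ∀ a : Matrix (Fin n) (Fin n) ℂ, (1+a)*(1-a) = (1-a)*(1+a) := by
    intro a; noncomm_ring
  exact h _

noncomputable def extm {n m : ℕ} (X : Matrix (Fin n) (Fin m) ℂ) : ℤ → ℤ → ℂ :=
  fun a b => if h : 0 ≤ a ∧ a < n ∧ 0 ≤ b ∧ b < m then
    X ⟨a.toNat, by omega⟩ ⟨b.toNat, by omega⟩ else 0

lemma extm_apply {n m : ℕ} (X : Matrix (Fin n) (Fin m) ℂ) (i : Fin n) (j : Fin m) :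
    extm X (i:ℕ) (j:ℕ) = X i j := by
  have hi := i.isLt; have hj := j.isLt
  rw [extm, dif_pos (by constructor; omega; constructor; omega; constructor; omega; omega)]
  congr 1 <;> apply Fin.ext <;> simp

lemma extm_apply' {n m : ℕ} (X : Matrix (Fin n) (Fin m) ℂ) (a b : ℤ)
    (h0 : 0 ≤ a) (h1 : a < n) (h2 : 0 ≤ b) (h3 : b < m) :
    extm X a b = X ⟨a.toNat, by omega⟩ ⟨b.toNat, by omega⟩ := by
  rw [extm, dif_pos ⟨h0, h1, h2, h3⟩]

lemma sylEntry {n m : ℕ} (R : Matrix (Fin n) (Fin m) ℂ) (i : Fin n) (j : Fin m) :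
    (Km n * R - R * Km m) i j = extm R ((i:ℕ)+1) ((j:ℕ)) - extm R ((i:ℕ)) ((j:ℕ)-1) := by
  have hi := i.isLt; have hj := j.isLt
  rw [Matrix.sub_apply, Kmul_apply, mulK_apply]
  congr 1
  · by_cases h : (i:ℕ)+1 < n
    · rw [dif_pos h, extm_apply' _ _ _ (by omega) (by omega) (by omega) (by omega)]
      congr 1 <;> apply Fin.ext <;> simp
    · rw [dif_neg h, extm, dif_neg (by omega)]
  · by_cases h : 1 ≤ (j:ℕ)
    · rw [dif_pos h, extm_apply' _ _ _ (by omega) (by omega) (by omega) (by omega)]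
      congr 1 <;> apply Fin.ext <;> simp <;> omega
    · rw [dif_neg h, extm, dif_neg (by omega)]

noncomputable def sfun {n m : ℕ} (X : Matrix (Fin n) (Fin m) ℂ) (j : ℕ) : ℂ :=
  ∑ k ∈ Finset.range (j+1), extm X ((n:ℤ)-1-k) ((j:ℤ)-k)

lemma sfun_syl {n m : ℕ} (R : Matrix (Fin n) (Fin m) ℂ) (j : ℕ) (hjm : j < m) (hjn : j < n) :
    sfun (Km n * R - R * Km m) j = 0 := by
  have key : ∀ k ∈ Finset.range (j+1),
      extm (Km n * R - R * Km m) ((n:ℤ)-1-k) ((j:ℤ)-k)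
        = extm R ((n:ℤ)-k) ((j:ℤ)-k) - extm R ((n:ℤ)-1-k) ((j:ℤ)-(k+1)) := by
    intro k hk
    rw [Finset.mem_range] at hk
    rw [extm_apply' _ _ _ (by omega) (by omega) (by omega) (by omega), sylEntry]
    congr 2 <;> simp <;> omega
  have key2 : ∀ k ∈ Finset.range (j+1),
      extm R ((n:ℤ)-k) ((j:ℤ)-k) - extm R ((n:ℤ)-1-k) ((j:ℤ)-(k+1))
        = (fun t : ℕ => extm R ((n:ℤ)-t) ((j:ℤ)-t)) k
          - (fun t : ℕ => extm R ((n:ℤ)-t) ((j:ℤ)-t)) (k+1) := by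
    intro k _
    simp only
    congr 2 <;> push_cast <;> ring
  rw [sfun, Finset.sum_congr rfl key, Finset.sum_congr rfl key2, Finset.sum_range_sub']
  rw [extm, dif_neg (by push_cast; omega)]
  rw [extm, dif_neg (by push_cast; omega)]
  simp

noncomputable def Rfun {n m : ℕ} (X : Matrix (Fin n) (Fin m) ℂ) (a : ℕ) (b : ℤ) : ℂ :=
  (if (a:ℤ) ≤ b then -∑ t ∈ Finset.range n, extm X t (b-(a:ℤ)+1+t) else 0)
  + ∑ t ∈ Finset.range a, extm X t (b-(a:ℤ)+1+t)

lemma Rfun_rec {n m : ℕ} (X : Matrix (Fin n) (Fin m) ℂ) (a : ℕ) (b : ℤ) :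
    Rfun X (a+1) b - Rfun X a (b-1) = extm X a b := by
  unfold Rfun
  have e1 : ∀ t:ℕ, extm X t (b - ((a+1:ℕ):ℤ) + 1 + t) = extm X t (b - (a:ℤ) + t) := by
    intro t; congr 1; push_cast; ring
  have e2 : ∀ t:ℕ, extm X t ((b-1) - ((a:ℕ):ℤ) + 1 + t) = extm X t (b - (a:ℤ) + t) := by
    intro t; congr 1; push_cast; ring
  simp only [e1, e2]
  rw [Finset.sum_range_succ]
  have harg : extm X a (b - (a:ℤ) + a) = extm X a b := by congr 1; push_cast; ring
  by_cases hc : ((a:ℕ):ℤ) ≤ b - 1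
  · rw [if_pos (by push_cast; omega), if_pos hc, harg]; ring
  · rw [if_neg (by push_cast; omega), if_neg hc, harg]; ring

lemma Rfun_neg {n m : ℕ} (X : Matrix (Fin n) (Fin m) ℂ) (a : ℕ) :
    Rfun X a (-1) = 0 := by
  unfold Rfun
  rw [if_neg (by push_cast; omega)]
  rw [Finset.sum_eq_zero, zero_add]
  intro t ht
  rw [Finset.mem_range] at ht
  rw [extm, dif_neg (by push_cast; omega)]

lemma Rfun_top {n m : ℕ} (X : Matrix (Fin n) (Fin m) ℂ)
    (hs : ∀ j : ℕ, j < m → j < n → sfun X j = 0)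
    (b : ℤ) (hb0 : 0 ≤ b) (hbm : b < m) :
    Rfun X n b = 0 := by
  have hrefl : ∑ t ∈ Finset.range n, extm X t (b-(n:ℤ)+1+t)
      = ∑ k ∈ Finset.range n, extm X ((n:ℤ)-1-k) (b-(k:ℤ)) := by
    rw [← Finset.sum_range_reflect]
    apply Finset.sum_congr rfl
    intro k hk
    rw [Finset.mem_range] at hk
    congr 1 <;> push_cast <;> omega
  by_cases hc : (n:ℤ) ≤ b
  · unfold Rfun
    rw [if_pos hc]; ring
  · -- b < n
    unfold Rfun
    rw [if_neg hc, zero_add, hrefl]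
    have hsub : Finset.range (b.toNat+1) ⊆ Finset.range n := by
      intro x hx; rw [Finset.mem_range] at *; omega
    rw [← Finset.sum_subset hsub]
    · have := hs b.toNat (by omega) (by omega)
      rw [sfun] at this
      rw [← this]
      apply Finset.sum_congr rfl
      intro k hk
      congr 1 <;> omega
    · intro k _ hk
      rw [Finset.mem_range] at hk
      rw [extm, dif_neg (by push_cast; omega)]

lemma syl_exists {n m : ℕ} (X : Matrix (Fin n) (Fin m) ℂ)
    (hs : ∀ j : ℕ, j < m → j < n → sfun X j = 0) :
    ∃ R : Matrix (Fin n) (Fin m) ℂ, Km n * R - R * Km m = X := by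
  set RR : Matrix (Fin n) (Fin m) ℂ := Matrix.of (fun i j => Rfun X (i:ℕ) ((j:ℕ):ℤ)) with hRR
  refine ⟨RR, ?_⟩
  have extmR : ∀ a b : ℤ, 0 ≤ a → a ≤ n → -1 ≤ b → b < m →
      extm RR a b = Rfun X a.toNat b := by
    intro a b h0 h1 h2 h3
    by_cases hb : b = -1
    · subst hb
      rw [extm, dif_neg (by omega), Rfun_neg]
    · by_cases ha : a = n
      · subst ha
        rw [extm, dif_neg (by omega)]
        rw [show ((n:ℕ):ℤ).toNat = n by omega]
        rw [Rfun_top X hs b (by omega) h3]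
      · rw [extm_apply' _ _ _ h0 (by omega) (by omega) h3, hRR, of_apply]
        simp only [Fin.val_mk]
        congr 1
        omega
  ext i j
  rw [sylEntry]
  have hi := i.isLt; have hj := j.isLt
  rw [extmR _ _ (by omega) (by omega) (by omega) (by omega)]
  rw [extmR _ _ (by omega) (by omega) (by omega) (by omega)]
  rw [show ((i:ℕ)+1 : ℤ).toNat = (i:ℕ)+1 by omega, show ((j:ℕ):ℤ) - 1 = ((j:ℕ):ℤ) - 1 from rfl,
    show ((i:ℕ):ℤ).toNat = (i:ℕ) by omega]
  rw [Rfun_rec, extm_apply]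

noncomputable def C0 {m n : ℕ} (μ ν : ℂ) (Z : Matrix (Fin n) (Fin m) ℂ)
    (A : Matrix (Fin m) (Fin n) ℂ) : Matrix (Fin n) (Fin m) ℂ :=
  ((2*Complex.I)⁻¹ * (starRingEnd ℂ) ν) • (Fm n * (Z - μ^2 • (Aᴴ * (QmInv m * Pm m))) * Qm m)

lemma expand_PQ {n m : ℕ} (R : Matrix (Fin n) (Fin m) ℂ) :
    Pm n * R * Qm m - Qm n * R * Pm m = (2*Complex.I) • (Km n * R - R * Km m) := by
  simp only [Pm, Qm, Matrix.add_mul, Matrix.sub_mul, Matrix.mul_add, Matrix.mul_sub,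
    Matrix.one_mul, Matrix.mul_one, Matrix.smul_mul, Matrix.mul_smul, smul_smul,
    Complex.I_mul_I, smul_sub, sub_smul, add_smul]
  match_scalars <;> simp [Complex.I_mul_I] <;> ring

section Main
variable {m n : ℕ} {μ ν : ℂ}

lemma star_mul_self_one (hν : ‖ν‖ = 1) : (starRingEnd ℂ) ν * ν = 1 := by
  rw [mul_comm, Complex.mul_conj, ← Complex.sq_norm, hν]
  norm_num

lemma mu_nu_sq (hμ : ‖μ‖ = 1) (hν : ‖ν‖ = 1) (h : μ = ν ∨ μ = -ν) :
    μ^2 * ((starRingEnd ℂ) ν)^2 = 1 := by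
  have h2 : μ^2 = ν^2 := by rcases h with h | h <;> rw [h] <;> ring
  rw [h2, ← mul_pow, mul_comm, star_mul_self_one hν, one_pow]

lemma L1 (hμ : ‖μ‖ = 1) (hν : ‖ν‖ = 1) (h : μ = ν ∨ μ = -ν)
    (R : Matrix (Fin n) (Fin m) ℂ) :
    (starRingEnd ℂ) ν • (Fm n *
      ((ν • Dmat n) * R - (ν • Dmat n)ᴴ * R * (μ^2 • (QmInv m * Pm m))) * Qm m)
      = (2*Complex.I) • (Km n * R - R * Km m) := by
  have hDn := Dmat_eq n
  have hDnH := DmatH_eq n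
  rw [conjTranspose_smul, hDnH, hDn]
  simp only [Complex.star_def]
  have e1 : Fm n * ((ν • (Fm n * Pm n)) * R
      - ((starRingEnd ℂ) ν • (Fm n * Qm n)) * R * (μ^2 • (QmInv m * Pm m))) * Qm m
      = ν • (Pm n * R * Qm m)
        - ((starRingEnd ℂ) ν * μ^2) • (Qm n * R * (QmInv m * (Pm m * Qm m))) := by
    simp only [Matrix.smul_mul, Matrix.mul_smul, Matrix.mul_sub, Matrix.sub_mul, smul_smul,
      Matrix.mul_assoc]
    rw [← Matrix.mul_assoc (Fm n) (Fm n), F_mul_F, Matrix.one_mul]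
    rw [← Matrix.mul_assoc (Fm n) (Fm n), F_mul_F, Matrix.one_mul]
    rw [mul_comm ((starRingEnd ℂ) ν) (μ^2)]
  rw [e1]
  have e2 : QmInv m * (Pm m * Qm m) = Pm m := by
    rw [Pm_comm_Qm, ← Matrix.mul_assoc, QmInv_mul_Qm, Matrix.one_mul]
  rw [e2, smul_sub, smul_smul, smul_smul]
  rw [star_mul_self_one hν]
  have e3 : (starRingEnd ℂ) ν * ((starRingEnd ℂ) ν * μ^2) = 1 := by
    have := mu_nu_sq hμ hν h
    rw [← this]; ring
  rw [e3, one_smul, one_smul]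
  exact expand_PQ R

lemma L2 (hμ : ‖μ‖ = 1) (hν : ‖ν‖ = 1) (h : μ = ν ∨ μ = -ν)
    (R : Matrix (Fin n) (Fin m) ℂ) (A : Matrix (Fin m) (Fin n) ℂ) :
    C0 μ ν ((Aᴴ - (ν • Dmat n)ᴴ * R) * (μ^2 • (QmInv m * Pm m)) + (ν • Dmat n) * R) A
      = Km n * R - R * Km m := by
  rw [C0]
  have e1 : (Aᴴ - (ν • Dmat n)ᴴ * R) * (μ^2 • (QmInv m * Pm m)) + (ν • Dmat n) * R
      - μ^2 • (Aᴴ * (QmInv m * Pm m))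
      = (ν • Dmat n) * R - (ν • Dmat n)ᴴ * R * (μ^2 • (QmInv m * Pm m)) := by
    simp only [Matrix.sub_mul, Matrix.mul_smul, Matrix.mul_assoc]
    module
  rw [e1, mul_smul, L1 hμ hν h R, smul_smul]
  rw [inv_mul_cancel₀ (by simp [Complex.I_ne_zero] : (2*Complex.I) ≠ 0), one_smul]

lemma claimA (hμ : ‖μ‖ = 1) (hν : ‖ν‖ = 1) (h : μ = ν ∨ μ = -ν)
    (Z : Matrix (Fin n) (Fin m) ℂ) (A : Matrix (Fin m) (Fin n) ℂ) :
    (Z, A) ∈ Tpair (μ • Dmat m) (ν • Dmat n) ↔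
      ∃ R : Matrix (Fin n) (Fin m) ℂ, Km n * R - R * Km m = C0 μ ν Z A := by
  have hμ1 : (starRingEnd ℂ) μ * μ = 1 := star_mul_self_one hμ
  have hμ1' : μ * (starRingEnd ℂ) μ = 1 := by rw [mul_comm]; exact hμ1
  set M : Matrix (Fin m) (Fin m) ℂ := μ • Dmat m with hM
  set N : Matrix (Fin n) (Fin n) ℂ := ν • Dmat n with hN
  have hMH : Mᴴ = (starRingEnd ℂ) μ • (Fm m * Qm m) := by
    rw [hM, conjTranspose_smul, DmatH_eq]
    simp only [Complex.star_def]
  have hMF : M = μ • (Fm m * Pm m) := by rw [hM, Dmat_eq]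
  set MHinv : Matrix (Fin m) (Fin m) ℂ := μ • (QmInv m * Fm m) with hMHinv
  have L0a : Mᴴ * MHinv = 1 := by
    rw [hMH, hMHinv, Matrix.smul_mul, Matrix.mul_smul, smul_smul, hμ1]
    rw [one_smul, Matrix.mul_assoc, ← Matrix.mul_assoc (Qm m), Qm_mul_QmInv,
      Matrix.one_mul, F_mul_F]
  have L0b : MHinv * M = μ^2 • (QmInv m * Pm m) := by
    rw [hMF, hMHinv, Matrix.smul_mul, Matrix.mul_smul, smul_smul]
    rw [Matrix.mul_assoc, ← Matrix.mul_assoc (Fm m), F_mul_F, Matrix.one_mul, pow_two]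
  set Minv : Matrix (Fin m) (Fin m) ℂ := (starRingEnd ℂ) μ • (PmInv m * Fm m) with hMinv
  have L0c : M * Minv = 1 := by
    rw [hMF, hMinv, Matrix.smul_mul, Matrix.mul_smul, smul_smul, hμ1']
    rw [one_smul, Matrix.mul_assoc, ← Matrix.mul_assoc (Pm m), Pm_mul_PmInv,
      Matrix.one_mul, F_mul_F]
  have L0d : Minv * M = 1 := by
    rw [hMF, hMinv, Matrix.smul_mul, Matrix.mul_smul, smul_smul, hμ1]
    rw [one_smul, Matrix.mul_assoc, ← Matrix.mul_assoc (Fm m), F_mul_F,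
      Matrix.one_mul, PmInv_mul_Pm]
  have hMinvH : Minvᴴ = MHinv := by
    have h1 : Minvᴴ * Mᴴ = 1 := by rw [← conjTranspose_mul, L0c, conjTranspose_one]
    calc Minvᴴ = Minvᴴ * (Mᴴ * MHinv) := by rw [L0a, Matrix.mul_one]
    _ = (Minvᴴ * Mᴴ) * MHinv := by rw [Matrix.mul_assoc]
    _ = MHinv := by rw [h1, Matrix.one_mul]
  have hNH : Nᴴ = (starRingEnd ℂ) ν • (Fm n * Qm n) := by
    rw [hN, conjTranspose_smul, DmatH_eq]
    simp only [Complex.star_def]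
  constructor
  · rintro ⟨S, R, hSR⟩
    rw [Prod.ext_iff] at hSR
    obtain ⟨hZ, hA⟩ := hSR
    simp only at hZ hA
    refine ⟨R, ?_⟩
    have hMS : M * S = A - Rᴴ * N := by rw [hA]; abel
    have hSHM : Sᴴ * Mᴴ = Aᴴ - Nᴴ * R := by
      have h1 : (M * S)ᴴ = Sᴴ * Mᴴ := by rw [conjTranspose_mul]
      rw [← h1, hMS, conjTranspose_sub, conjTranspose_mul, conjTranspose_conjTranspose]
    have h4 : Sᴴ * M = (Aᴴ - Nᴴ * R) * (μ^2 • (QmInv m * Pm m)) := by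
      calc Sᴴ * M = Sᴴ * ((Mᴴ * MHinv) * M) := by rw [L0a, Matrix.one_mul]
      _ = (Sᴴ * Mᴴ) * (MHinv * M) := by
          simp only [Matrix.mul_assoc]
      _ = (Aᴴ - Nᴴ * R) * (μ^2 • (QmInv m * Pm m)) := by rw [hSHM, L0b]
    have hZ2 : Z = (Aᴴ - (ν • Dmat n)ᴴ * R) * (μ^2 • (QmInv m * Pm m)) + (ν • Dmat n) * R := by
      rw [hZ, h4, hN]
    rw [hZ2]
    exact (L2 hμ hν h R A).symm
  · rintro ⟨R, hR⟩
    set S : Matrix (Fin m) (Fin n) ℂ := Minv * (A - Rᴴ * N) with hS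
    have hMS : M * S = A - Rᴴ * N := by
      rw [hS, ← Matrix.mul_assoc, L0c, Matrix.one_mul]
    have hSH : Sᴴ * M = (Aᴴ - Nᴴ * R) * (μ^2 • (QmInv m * Pm m)) := by
      have h1 : Sᴴ = (Aᴴ - Nᴴ * R) * MHinv := by
        rw [hS, conjTranspose_mul, hMinvH, conjTranspose_sub, conjTranspose_mul,
          conjTranspose_conjTranspose]
      rw [h1, Matrix.mul_assoc, L0b]
    set Z' : Matrix (Fin n) (Fin m) ℂ :=
      (Aᴴ - (ν • Dmat n)ᴴ * R) * (μ^2 • (QmInv m * Pm m)) + (ν • Dmat n) * R with hZ'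
    have hC : C0 μ ν Z' A = C0 μ ν Z A := by rw [hZ', L2 hμ hν h R A, hR]
    have hdiffW : ∀ W : Matrix (Fin n) (Fin m) ℂ,
        Fm n * (Z - W) * Qm m - Fm n * (Z' - W) * Qm m = Fm n * (Z - Z') * Qm m := by
      intro W; simp only [Matrix.mul_sub, Matrix.sub_mul]; abel
    have hdiff : C0 μ ν Z A - C0 μ ν Z' A
        = ((2*Complex.I)⁻¹ * (starRingEnd ℂ) ν) • (Fm n * (Z - Z') * Qm m) := by
      rw [C0, C0, ← smul_sub]
      congr 1
      exact hdiffW _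
    rw [hC, sub_self] at hdiff
    have hc0 : ((2*Complex.I)⁻¹ * (starRingEnd ℂ) ν) ≠ 0 := by
      apply mul_ne_zero
      · simp [Complex.I_ne_zero]
      · simp only [ne_eq, map_eq_zero]
        intro hc; rw [hc] at hν; simp at hν
    have hFZQ : Fm n * (Z - Z') * Qm m = 0 := by
      have := hdiff.symm
      rcases smul_eq_zero.mp this with hc | hm
      · exact absurd hc hc0
      · exact hm
    have hZZ' : Z = Z' := by
      have h2 : Fm n * (Fm n * (Z - Z') * Qm m) * QmInv m = Z - Z' := by
        rw [← Matrix.mul_assoc, ← Matrix.mul_assoc, F_mul_F, Matrix.one_mul,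
          Matrix.mul_assoc, Qm_mul_QmInv, Matrix.mul_one]
      rw [hFZQ] at h2
      simp only [Matrix.mul_zero, Matrix.zero_mul] at h2
      have := h2.symm
      rwa [sub_eq_zero] at this
    refine ⟨S, R, ?_⟩
    rw [Prod.ext_iff]
    constructor
    · simp only
      rw [hZZ', hZ', hSH, hN]
    · simp only
      rw [hMS]
      abel

end Main

lemma mulQ_apply {n m : ℕ} (X : Matrix (Fin n) (Fin m) ℂ) (i : Fin n) (j : Fin m) :
    (X * Qm m) i j = X i j - Complex.I *
      (if h : 1 ≤ (j:ℕ) then X i ⟨(j:ℕ)-1, by omega⟩ else 0) := by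
  simp only [Qm, Matrix.mul_sub, Matrix.mul_one, Matrix.mul_smul, Matrix.sub_apply,
    Matrix.smul_apply, mulK_apply, smul_eq_mul]

lemma extm_sub_smul {n m : ℕ} (X Y : Matrix (Fin n) (Fin m) ℂ) (c : ℂ) (a b : ℤ) :
    extm (X - c • Y) a b = extm X a b - c * extm Y a b := by
  unfold extm
  split
  · simp [Matrix.sub_apply]
  · simp

lemma sfun_sub_smul {n m : ℕ} (X Y : Matrix (Fin n) (Fin m) ℂ) (c : ℂ) (j : ℕ) :
    sfun (X - c • Y) j = sfun X j - c * sfun Y j := by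
  unfold sfun
  simp only [extm_sub_smul, Finset.sum_sub_distrib, Finset.mul_sum]

lemma sfun_col {n m : ℕ} (u : ℕ → ℂ) (j : ℕ) (hjn : j < n) (hjm : j < m) :
    sfun (Fm n * (Matrix.of fun (p : Fin n) (q : Fin m) =>
        if (q:ℕ) = 0 then u (p:ℕ) else 0) * Qm m) j
      = u j - Complex.I * (if 1 ≤ j then u (j-1) else 0) := by
  set D : Matrix (Fin n) (Fin m) ℂ :=
    Matrix.of (fun (p : Fin n) (q : Fin m) => if (q:ℕ) = 0 then u (p:ℕ) else 0) with hD
  have hDa : ∀ (p : Fin n) (q : Fin m), D p q = if (q:ℕ) = 0 then u (p:ℕ) else 0 := by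
    intro p q; rw [hD]; rfl
  have hent : ∀ (a : Fin n) (b : Fin m), (Fm n * D * Qm m) a b
      = (if (b:ℕ) = 0 then u ((n:ℕ)-1-(a:ℕ)) else 0)
        - Complex.I * (if (b:ℕ) = 1 then u ((n:ℕ)-1-(a:ℕ)) else 0) := by
    intro a b
    rw [mulQ_apply, Fmul_apply, hDa]
    simp only [rev, Fin.val_mk]
    congr 1
    by_cases hb : 1 ≤ (b:ℕ)
    · rw [dif_pos hb, Fmul_apply, hDa]
      simp only [rev, Fin.val_mk]
      by_cases hb1 : (b:ℕ) = 1
      · rw [if_pos (by omega), if_pos hb1]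
      · rw [if_neg (by omega), if_neg hb1]
    · rw [dif_neg hb, if_neg (by omega)]
  rw [sfun]
  have key : ∀ k ∈ Finset.range (j+1),
      extm (Fm n * D * Qm m) ((n:ℤ)-1-k) ((j:ℤ)-k)
        = (if k = j then u j else 0) + (if k + 1 = j then -(Complex.I * u k) else 0) := by
    intro k hk
    rw [Finset.mem_range] at hk
    rw [extm_apply' _ _ _ (by omega) (by omega) (by omega) (by omega), hent]
    simp only [Fin.val_mk]
    have hrow : ((n:ℤ)-1-(k:ℕ)).toNat = n-1-k := by omega
    have hcol : (((j:ℤ)-(k:ℕ)).toNat : ℕ) = j-k := by omega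
    rw [hrow, hcol]
    have hrow2 : n-1-(n-1-k) = k := by omega
    rw [hrow2]
    by_cases h1 : k = j
    · subst h1
      rw [if_pos (show k - k = 0 by omega), if_neg (show ¬(k - k = 1) by omega),
        if_pos rfl, if_neg (show ¬(k + 1 = k) by omega)]
      ring
    · by_cases h2 : k + 1 = j
      · rw [if_neg (show ¬(j - k = 0) by omega), if_pos (show j - k = 1 by omega),
          if_neg h1, if_pos h2]
        ring
      · rw [if_neg (show ¬(j - k = 0) by omega), if_neg (show ¬(j - k = 1) by omega),
          if_neg h1, if_neg h2]
        ring
  rw [Finset.sum_congr rfl key, Finset.sum_add_distrib,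
    Finset.sum_ite_eq' (Finset.range (j+1)) j (fun _ => u j),
    if_pos (Finset.mem_range.mpr (by omega))]
  by_cases hj : 1 ≤ j
  · rw [if_pos hj]
    have hco : ∀ x : ℕ, (if x + 1 = j then -(Complex.I * u x) else 0)
        = (if x = j-1 then -(Complex.I * u (j-1)) else 0) := by
      intro x
      by_cases hx : x + 1 = j
      · rw [if_pos hx, if_pos (by omega)]
        have hxj : x = j - 1 := by omega
        rw [hxj]
      · rw [if_neg hx, if_neg (by omega)]
    simp only [hco]
    rw [Finset.sum_ite_eq' (Finset.range (j+1)) (j-1) (fun _ => -(Complex.I * u (j-1))),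
      if_pos (Finset.mem_range.mpr (by omega))]
    ring
  · rw [if_neg hj]
    rw [Finset.sum_eq_zero (fun k _ => by rw [if_neg (by omega)])]
    ring

lemma sfun_row {n m : ℕ} (u : ℕ → ℂ) (j : ℕ) (hjn : j < n) (hjm : j < m) :
    sfun (Fm n * (Matrix.of fun (p : Fin n) (q : Fin m) =>
        if (p:ℕ) = 0 then u (q:ℕ) else 0) * Qm m) j
      = u j - Complex.I * (if 1 ≤ j then u (j-1) else 0) := by
  set D : Matrix (Fin n) (Fin m) ℂ :=
    Matrix.of (fun (p : Fin n) (q : Fin m) => if (p:ℕ) = 0 then u (q:ℕ) else 0) with hD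
  have hDa : ∀ (p : Fin n) (q : Fin m), D p q = if (p:ℕ) = 0 then u (q:ℕ) else 0 := by
    intro p q; rw [hD]; rfl
  have hent : ∀ (a : Fin n) (b : Fin m), (Fm n * D * Qm m) a b
      = if (a:ℕ) = n-1 then
          (u (b:ℕ) - Complex.I * (if 1 ≤ (b:ℕ) then u ((b:ℕ)-1) else 0)) else 0 := by
    intro a b
    have ha := a.isLt
    rw [mulQ_apply, Fmul_apply, hDa]
    simp only [rev, Fin.val_mk]
    by_cases han : (a:ℕ) = n-1
    · rw [if_pos han]; simp only [show n - 1 - (a:ℕ) = 0 by omega, ↓reduceIte]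
      congr 1
      by_cases hb : 1 ≤ (b:ℕ)
      · rw [dif_pos hb, if_pos hb, Fmul_apply, hDa]
        simp only [rev, Fin.val_mk]
        simp only [show n - 1 - (a:ℕ) = 0 by omega, ↓reduceIte]
      · rw [dif_neg hb, if_neg hb]
    · rw [if_neg han]; simp only [show ¬ (n - 1 - (a:ℕ) = 0) by omega, ↓reduceIte, zero_sub]
      by_cases hb : 1 ≤ (b:ℕ)
      · rw [dif_pos hb, Fmul_apply, hDa]
        simp only [rev, Fin.val_mk]
        simp only [show ¬ (n - 1 - (a:ℕ) = 0) by omega, ↓reduceIte]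
        ring
      · rw [dif_neg hb]
        ring
  rw [sfun]
  have key : ∀ k ∈ Finset.range (j+1),
      extm (Fm n * D * Qm m) ((n:ℤ)-1-k) ((j:ℤ)-k)
        = if k = 0 then (u j - Complex.I * (if 1 ≤ j then u (j-1) else 0)) else 0 := by
    intro k hk
    rw [Finset.mem_range] at hk
    rw [extm_apply' _ _ _ (by omega) (by omega) (by omega) (by omega), hent]
    simp only [Fin.val_mk]
    have hrow : ((n:ℤ)-1-(k:ℕ)).toNat = n-1-k := by omega
    have hcol : (((j:ℤ)-(k:ℕ)).toNat : ℕ) = j-k := by omega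
    rw [hrow, hcol]
    by_cases h1 : k = 0
    · subst h1
      rw [if_pos (by omega), if_pos rfl]
      simp only [Nat.sub_zero]
    · rw [if_neg (by omega), if_neg h1]
  rw [Finset.sum_congr rfl key,
    Finset.sum_ite_eq' (Finset.range (j+1)) 0
      (fun _ => (u j - Complex.I * (if 1 ≤ j then u (j-1) else 0))),
    if_pos (Finset.mem_range.mpr (by omega))]

lemma C0_sub {m n : ℕ} (μ ν : ℂ) (Z D : Matrix (Fin n) (Fin m) ℂ)
    (A : Matrix (Fin m) (Fin n) ℂ) :
    C0 μ ν (Z - D) A = C0 μ ν Z A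
      - ((2*Complex.I)⁻¹ * (starRingEnd ℂ) ν) • (Fm n * D * Qm m) := by
  rw [C0, C0, ← smul_sub]
  congr 1
  simp only [Matrix.mul_sub, Matrix.sub_mul]
  abel


/-- For `|μ| = |ν| = 1` and `μ = ±ν`:
`ℂ^{n×m} × ℂ^{m×n} = T(μΔ_m, νΔ_n) ⊕_ℝ (V × {0})`, where `V` consists of the
matrices supported in the first column if `n ≤ m` and in the first row if
`n > m`. -/
theorem stmt14 (m n : ℕ) (μ ν : ℂ)
    (hμ : ‖μ‖ = 1) (hν : ‖ν‖ = 1)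
    (h : μ = ν ∨ μ = -ν)
    (B : Matrix (Fin n) (Fin m) ℂ) (A : Matrix (Fin m) (Fin n) ℂ) :
    ∃! D : Matrix (Fin n) (Fin m) ℂ,
      ((n ≤ m → ∀ (p : Fin n) (q : Fin m), (q : ℕ) ≠ 0 → D p q = 0) ∧
       (m < n → ∀ (p : Fin n) (q : Fin m), (p : ℕ) ≠ 0 → D p q = 0)) ∧
      (B - D, A) ∈ Tpair (μ • Dmat m) (ν • Dmat n) := by
  classical
  set c1 : ℂ := (2*Complex.I)⁻¹ * (starRingEnd ℂ) ν with hc1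
  have hc10 : c1 ≠ 0 := by
    rw [hc1]
    apply mul_ne_zero
    · simp [Complex.I_ne_zero]
    · simp only [ne_eq, map_eq_zero]
      intro hc; rw [hc] at hν; simp at hν
  set σ : ℕ → ℂ := fun j => sfun (C0 μ ν B A) j with hσ
  have memiff : ∀ D : Matrix (Fin n) (Fin m) ℂ,
      ((B - D, A) ∈ Tpair (μ • Dmat m) (ν • Dmat n)) ↔
      (∀ j : ℕ, j < m → j < n → σ j - c1 * sfun (Fm n * D * Qm m) j = 0) := by
    intro D
    rw [claimA hμ hν h]
    constructor
    · rintro ⟨R, hR⟩ j hjm hjn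
      have h0 := sfun_syl R j hjm hjn
      rw [hR, C0_sub, sfun_sub_smul] at h0
      exact h0
    · intro hs
      exact syl_exists (C0 μ ν (B-D) A) (fun j hjm hjn => by
        rw [C0_sub, sfun_sub_smul]; exact hs j hjm hjn)
  set uu : ℕ → ℂ := fun j =>
    Nat.rec (c1⁻¹ * σ 0) (fun k ih => c1⁻¹ * σ (k+1) + Complex.I * ih) j with huudef
  have uu_zero : uu 0 = c1⁻¹ * σ 0 := rfl
  have uu_succ : ∀ k : ℕ, uu (k+1) = c1⁻¹ * σ (k+1) + Complex.I * uu k := fun k => rfl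
  have huu : ∀ j : ℕ, σ j - c1 * (uu j - Complex.I * (if 1 ≤ j then uu (j-1) else 0)) = 0 := by
    intro j
    cases j with
    | zero =>
      rw [if_neg (by omega), mul_zero, sub_zero, uu_zero, ← mul_assoc,
        mul_inv_cancel₀ hc10, one_mul, sub_self]
    | succ k =>
      rw [if_pos (by omega), Nat.add_sub_cancel, uu_succ]
      have e : (c1⁻¹ * σ (k+1) + Complex.I * uu k) - Complex.I * uu k = c1⁻¹ * σ (k+1) := by
        ring
      rw [e, ← mul_assoc, mul_inv_cancel₀ hc10, one_mul, sub_self]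
  have huniq : ∀ u' : ℕ → ℂ,
      (∀ j : ℕ, j < m → j < n →
        σ j - c1 * (u' j - Complex.I * (if 1 ≤ j then u' (j-1) else 0)) = 0) →
      ∀ j : ℕ, j < m → j < n → u' j = uu j := by
    intro u' hcond j
    induction j with
    | zero =>
      intro hm hn
      have hk := hcond 0 hm hn
      rw [if_neg (by omega), mul_zero, sub_zero] at hk
      rw [uu_zero]
      apply mul_left_cancel₀ hc10
      rw [← mul_assoc, mul_inv_cancel₀ hc10, one_mul]
      linear_combination -hk
    | succ k ih =>
      intro hm hn
      have hk := hcond (k+1) hm hn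
      rw [if_pos (by omega), Nat.add_sub_cancel] at hk
      have hk' : u' k = uu k := ih (by omega) (by omega)
      rw [uu_succ, ← hk']
      apply mul_left_cancel₀ hc10
      rw [mul_add, ← mul_assoc, mul_inv_cancel₀ hc10, one_mul]
      linear_combination -hk
  rcases le_or_gt n m with hnm | hmn
  · -- n ≤ m : first-column case
    rcases Nat.eq_zero_or_pos n with hn0 | hn0
    · refine ⟨0, ⟨⟨fun _ p q _ => rfl, fun _ p q _ => rfl⟩, ?_⟩, ?_⟩
      · exact (memiff 0).mpr (fun j hjm hjn => absurd hjn (by omega))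
      · intro D' _
        ext p q
        exact absurd p.isLt (by omega)
    · set D : Matrix (Fin n) (Fin m) ℂ :=
        Matrix.of (fun (p : Fin n) (q : Fin m) => if (q:ℕ) = 0 then uu (p:ℕ) else 0) with hD
      have hDa : ∀ p q, D p q = if (q:ℕ) = 0 then uu (p:ℕ) else 0 := by
        intro p q; rw [hD]; rfl
      refine ⟨D, ⟨⟨fun _ p q hq => by rw [hDa, if_neg hq],
        fun hc => absurd hc (by omega)⟩, ?_⟩, ?_⟩
      · refine (memiff D).mpr (fun j hjm hjn => ?_)
        rw [hD, sfun_col uu j hjn hjm]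
        exact huu j
      · rintro D' ⟨⟨hs1, _⟩, hmem⟩
        have hm0 : 0 < m := by omega
        set u' : ℕ → ℂ :=
          fun t => if ht : t < n then D' ⟨t, ht⟩ ⟨0, hm0⟩ else uu t with hu'
        have hform : D' = Matrix.of (fun (p : Fin n) (q : Fin m) =>
            if (q:ℕ) = 0 then u' (p:ℕ) else 0) := by
          ext p q
          show D' p q = if (q:ℕ) = 0 then u' (p:ℕ) else 0
          by_cases hq : (q:ℕ) = 0
          · rw [if_pos hq, hu']
            simp only [dif_pos p.isLt, Fin.eta]
            congr 1
            exact (Fin.ext (by simpa using hq) : q = ⟨0, hm0⟩)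
          · rw [if_neg hq]
            exact hs1 hnm p q hq
        have hcnd := (memiff D').mp hmem
        have hcnd2 : ∀ j : ℕ, j < m → j < n →
            σ j - c1 * (u' j - Complex.I * (if 1 ≤ j then u' (j-1) else 0)) = 0 := by
          intro j hjm hjn
          have := hcnd j hjm hjn
          rw [hform, sfun_col u' j hjn hjm] at this
          exact this
        have heq := huniq u' hcnd2
        ext p q
        rw [hDa]
        by_cases hq : (q:ℕ) = 0
        · rw [if_pos hq]
          have h1 : D' p q = u' (p:ℕ) := by
            rw [hu']
            simp only [dif_pos p.isLt, Fin.eta]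
            congr 1
            exact (Fin.ext (by simpa using hq) : q = ⟨0, hm0⟩)
          rw [h1, heq (p:ℕ) (by omega) p.isLt]
        · rw [if_neg hq]
          exact hs1 hnm p q hq
  · -- m < n : first-row case
    have hn0 : 0 < n := by omega
    set D : Matrix (Fin n) (Fin m) ℂ :=
      Matrix.of (fun (p : Fin n) (q : Fin m) => if (p:ℕ) = 0 then uu (q:ℕ) else 0) with hD
    have hDa : ∀ p q, D p q = if (p:ℕ) = 0 then uu (q:ℕ) else 0 := by
      intro p q; rw [hD]; rfl
    refine ⟨D, ⟨⟨fun hc => absurd hc (by omega),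
      fun _ p q hp => by rw [hDa, if_neg hp]⟩, ?_⟩, ?_⟩
    · refine (memiff D).mpr (fun j hjm hjn => ?_)
      rw [hD, sfun_row uu j hjn hjm]
      exact huu j
    · rintro D' ⟨⟨_, hs2⟩, hmem⟩
      set u' : ℕ → ℂ :=
        fun t => if ht : t < m then D' ⟨0, hn0⟩ ⟨t, ht⟩ else uu t with hu'
      have hform : D' = Matrix.of (fun (p : Fin n) (q : Fin m) =>
          if (p:ℕ) = 0 then u' (q:ℕ) else 0) := by
        ext p q
        show D' p q = if (p:ℕ) = 0 then u' (q:ℕ) else 0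
        by_cases hp : (p:ℕ) = 0
        · rw [if_pos hp, hu']
          simp only [dif_pos q.isLt, Fin.eta]
          congr 1
          exact (Fin.ext (by simpa using hp) : p = ⟨0, hn0⟩)
        · rw [if_neg hp]
          exact hs2 hmn p q hp
      have hcnd := (memiff D').mp hmem
      have hcnd2 : ∀ j : ℕ, j < m → j < n →
          σ j - c1 * (u' j - Complex.I * (if 1 ≤ j then u' (j-1) else 0)) = 0 := by
        intro j hjm hjn
        have := hcnd j hjm hjn
        rw [hform, sfun_row u' j hjn hjm] at this
        exact this
      have heq := huniq u' hcnd2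
      ext p q
      rw [hDa]
      by_cases hp : (p:ℕ) = 0
      · rw [if_pos hp]
        have h1 : D' p q = u' (q:ℕ) := by
          rw [hu']
          simp only [dif_pos q.isLt, Fin.eta]
          congr 1
          exact (Fin.ext (by simpa using hp) : p = ⟨0, hn0⟩)
        rw [h1, heq (q:ℕ) q.isLt (by omega)]
      · rw [if_neg hp]
        exact hs2 hmn p q hp
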